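/- For τ with Im τ > 0, the derivative identity θ₁′(0|τ)/θ₁′(0|2τ) = 2·θ₄(0|2τ)/θ₂(0|τ) holds, where θ₁′ denotes the derivative of θ₁ with respect to its first argument. -/

import Mathlib

open Complex

/-- Jacobi theta function θ₁(u|τ). -/
noncomputable def theta1 (u τ : ℂ) : ℂ :=
  -I * ∑' k : ℤ, (-1 : ℂ) ^ k * Complex.exp ((Real.pi : ℂ) * I * τ * ((k : ℂ) + 1/2) ^ 2) *
      Complex.exp ((Real.pi : ℂ) * I * (2 * (k : ℂ) + 1) * u)

/-- Jacobi theta function θ₂(u|τ). -/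
noncomputable def theta2 (u τ : ℂ) : ℂ :=
  ∑' k : ℤ, Complex.exp ((Real.pi : ℂ) * I * τ * ((k : ℂ) + 1/2) ^ 2) *
      Complex.exp ((Real.pi : ℂ) * I * (2 * (k : ℂ) + 1) * u)

/-- Jacobi theta function θ₃(u|τ). -/
noncomputable def theta3 (u τ : ℂ) : ℂ :=
  ∑' k : ℤ, Complex.exp ((Real.pi : ℂ) * I * τ * (k : ℂ) ^ 2) *
      Complex.exp (2 * (Real.pi : ℂ) * I * (k : ℂ) * u)

/-- Jacobi theta function θ₄(u|τ). -/
noncomputable def theta4 (u τ : ℂ) : ℂ :=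
  ∑' k : ℤ, (-1 : ℂ) ^ k * Complex.exp ((Real.pi : ℂ) * I * τ * (k : ℂ) ^ 2) *
      Complex.exp (2 * (Real.pi : ℂ) * I * (k : ℂ) * u)

open Real


lemma norm_exp_aux (τ : ℂ) (c : ℝ) :
    ‖Complex.exp ((π:ℂ) * I * τ * (c:ℂ))‖ = Real.exp (-(π * c * τ.im)) := by
  rw [Complex.norm_exp]
  congr 1
  simp [Complex.mul_re, Complex.mul_im]
  ring

lemma norm_exp_half (τ : ℂ) (k : ℤ) :
    ‖Complex.exp ((π:ℂ) * I * τ * ((k:ℂ)+1/2)^2)‖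
      = Real.exp (-(π * ((k:ℝ)+1/2)^2 * τ.im)) := by
  rw [show ((k:ℂ)+1/2)^2 = ((((k:ℝ)+1/2)^2 : ℝ) : ℂ) by push_cast; ring, norm_exp_aux]

lemma norm_exp_sq (τ : ℂ) (k : ℤ) :
    ‖Complex.exp ((π:ℂ) * I * τ * (k:ℂ)^2)‖
      = Real.exp (-(π * (k:ℝ)^2 * τ.im)) := by
  rw [show ((k:ℂ))^2 = ((((k:ℝ))^2 : ℝ) : ℂ) by push_cast; ring, norm_exp_aux]

lemma summable_bound_half (τ : ℂ) (hτ : 0 < τ.im) (j : ℕ) :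
    Summable (fun k : ℤ => |(k:ℝ)|^j * Real.exp (-(π * ((k:ℝ)+1/2)^2 * τ.im))) := by
  refine Summable.of_nonneg_of_le (fun k => by positivity) (fun k => ?_)
    (summable_pow_mul_jacobiTheta₂_term_bound (τ.im/2) hτ j)
  have h1 : ((|k| : ℤ) : ℝ)^j = |(k:ℝ)|^j := by push_cast; ring
  rw [← h1]
  gcongr
  have h2 : -|(k:ℝ)| ≤ (k:ℝ) := neg_abs_le _
  have h3 : ((|k| : ℤ) : ℝ) = |(k:ℝ)| := by push_cast; ring
  rw [h3]
  nlinarith [Real.pi_pos, mul_pos Real.pi_pos hτ, abs_nonneg ((k:ℝ))]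

lemma summable_bound_sq (τ : ℂ) (hτ : 0 < τ.im) (j : ℕ) :
    Summable (fun k : ℤ => |(k:ℝ)|^j * Real.exp (-(π * (k:ℝ)^2 * τ.im))) := by
  refine Summable.of_nonneg_of_le (fun k => by positivity) (fun k => ?_)
    (summable_pow_mul_jacobiTheta₂_term_bound 0 hτ j)
  have h1 : ((|k| : ℤ) : ℝ)^j = |(k:ℝ)|^j := by push_cast; ring
  rw [← h1]
  gcongr
  have h3 : ((|k| : ℤ) : ℝ) = |(k:ℝ)| := by push_cast; ring
  rw [h3]
  nlinarith [Real.pi_pos, mul_pos Real.pi_pos hτ, abs_nonneg ((k:ℝ))]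

lemma neg_one_zpow_norm (k : ℤ) : ‖(-1:ℂ)^k‖ = 1 := by
  simp [norm_zpow]

lemma neg_one_zpow_neg (k : ℤ) : (-1:ℂ)^(-k) = (-1:ℂ)^k := by
  have h : (-1:ℂ)^k * (-1:ℂ)^k = 1 := by
    rw [← mul_zpow]
    norm_num
  rw [zpow_neg, inv_eq_of_mul_eq_one_left h]

lemma neg_one_zpow_add (a b : ℤ) : (-1:ℂ)^(a+b) = (-1:ℂ)^a * (-1:ℂ)^b :=
  zpow_add₀ (by norm_num) a b

noncomputable def D1f (τ : ℂ) (k : ℤ) : ℂ :=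
  (π:ℂ) * (2*(k:ℂ)+1) * ((-1:ℂ)^k * Complex.exp ((π:ℂ)*I*τ*((k:ℂ)+1/2)^2))
noncomputable def T2f (τ : ℂ) (k : ℤ) : ℂ := Complex.exp ((π:ℂ)*I*τ*((k:ℂ)+1/2)^2)
noncomputable def T4f (τ : ℂ) (k : ℤ) : ℂ := (-1:ℂ)^k * Complex.exp ((π:ℂ)*I*τ*(k:ℂ)^2)
noncomputable def Jf (τ : ℂ) (k : ℤ) : ℂ :=
  2*(π:ℂ)*(k:ℂ) * ((-1:ℂ)^k * Complex.exp ((π:ℂ)*I*τ*(k:ℂ)^2))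

lemma summable_T2f (τ : ℂ) (hτ : 0 < τ.im) : Summable (fun k : ℤ => ‖T2f τ k‖) := by
  refine ((summable_bound_half τ hτ 0).congr fun k => ?_)
  rw [T2f, norm_exp_half, pow_zero, one_mul]

lemma summable_T4f (τ : ℂ) (hτ : 0 < τ.im) : Summable (fun k : ℤ => ‖T4f τ k‖) := by
  refine ((summable_bound_sq τ hτ 0).congr fun k => ?_)
  rw [T4f, norm_mul, neg_one_zpow_norm, one_mul, norm_exp_sq, pow_zero, one_mul]

lemma summable_D1f (τ : ℂ) (hτ : 0 < τ.im) : Summable (fun k : ℤ => ‖D1f τ k‖) := by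
  have h := (((summable_bound_half τ hτ 1).mul_left (2*π)).add
    ((summable_bound_half τ hτ 0).mul_left π))
  refine h.of_nonneg_of_le (fun k => norm_nonneg _) (fun k => ?_)
  have hn : ‖D1f τ k‖ = (π * |2*(k:ℝ)+1|) * Real.exp (-(π * ((k:ℝ)+1/2)^2 * τ.im)) := by
    rw [D1f, show ((π:ℂ) * (2*(k:ℂ)+1)) = ((π * (2*(k:ℝ)+1) : ℝ) : ℂ) from by push_cast; ring,
      norm_mul, norm_mul, neg_one_zpow_norm, one_mul, norm_exp_half,
      Complex.norm_real, Real.norm_eq_abs, abs_mul, abs_of_pos Real.pi_pos]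
  rw [hn, pow_one, pow_zero, one_mul]
  have h2 : |2*(k:ℝ)+1| ≤ 2*|(k:ℝ)|+1 := by
    refine (abs_add_le _ _).trans ?_
    rw [abs_mul]
    norm_num
  have hE := (Real.exp_pos (-(π * ((k:ℝ)+1/2)^2 * τ.im))).le
  calc (π * |2*(k:ℝ)+1|) * Real.exp (-(π * ((k:ℝ)+1/2)^2 * τ.im))
      ≤ (π * (2*|(k:ℝ)|+1)) * Real.exp (-(π * ((k:ℝ)+1/2)^2 * τ.im)) :=
        mul_le_mul_of_nonneg_right (mul_le_mul_of_nonneg_left h2 Real.pi_pos.le) hE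
    _ = 2*π*(|(k:ℝ)| * Real.exp (-(π * ((k:ℝ)+1/2)^2 * τ.im)))
        + π * Real.exp (-(π * ((k:ℝ)+1/2)^2 * τ.im)) := by ring

lemma summable_Jf (τ : ℂ) (hτ : 0 < τ.im) : Summable (fun k : ℤ => ‖Jf τ k‖) := by
  refine ((summable_bound_sq τ hτ 1).mul_left (2*π)).congr fun k => ?_
  rw [Jf, show (2*(π:ℂ)*(k:ℂ)) = ((2*π*(k:ℝ) : ℝ) : ℂ) from by push_cast; ring,
    norm_mul, norm_mul, neg_one_zpow_norm, one_mul, norm_exp_sq, pow_one,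
    Complex.norm_real, Real.norm_eq_abs, abs_mul, abs_mul, abs_of_pos Real.pi_pos]
  rw [_root_.abs_of_nonneg (by norm_num : (0:ℝ) ≤ 2)]
  ring

lemma neg_one_zpow_neg' (k : ℤ) : (-1:ℂ)^(-k) = (-1:ℂ)^k := by
  have h : (-1:ℂ)^k * (-1:ℂ)^k = 1 := by
    rw [← mul_zpow]; norm_num
  rw [zpow_neg, inv_eq_of_mul_eq_one_left h]

lemma neg_one_zpow_add' (a b : ℤ) : (-1:ℂ)^(a+b) = (-1:ℂ)^a * (-1:ℂ)^b :=
  zpow_add₀ (by norm_num) a b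

lemma neg_one_zpow_norm' (k : ℤ) : ‖(-1:ℂ)^k‖ = 1 := by simp [norm_zpow]

lemma key_identity (τ : ℂ) (hτ : 0 < τ.im) :
    (∑' k : ℤ, D1f τ k) * (∑' k : ℤ, T2f τ k)
      = 2 * (∑' k : ℤ, T4f (2*τ) k) * (∑' k : ℤ, D1f (2*τ) k) := by
  have h2τ : 0 < (2*τ).im := by
    have : (2*τ).im = 2*τ.im := by simp
    rw [this]; linarith
  rw [tsum_mul_tsum_of_summable_norm (summable_D1f τ hτ) (summable_T2f τ hτ), mul_assoc,
    tsum_mul_tsum_of_summable_norm (summable_T4f _ h2τ) (summable_D1f _ h2τ)]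
  set G : ℤ×ℤ → ℂ := fun p => D1f τ p.1 * T2f τ p.2 with hGdef
  set H : ℤ×ℤ → ℂ := fun p => T4f (2*τ) p.1 * D1f (2*τ) p.2 with hHdef
  set W : ℤ×ℤ → ℂ := fun q => (π:ℂ)*(2*(q.1:ℂ)+2*(q.2:ℂ)+1) * ((-1:ℂ)^(q.1+q.2)
    * Complex.exp ((π:ℂ)*I*τ*(2*(q.1:ℂ)^2 + 2*((q.2:ℂ)+1/2)^2))) with hWdef
  set K : ℤ×ℤ → ℂ := fun q => Jf (2*τ) q.1 * ((-1:ℂ)^q.2 * T2f (2*τ) q.2) with hKdef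
  set G₁ : ℤ×ℤ → ℂ := fun p => if (p.1+p.2) % 2 = 0 then G p else 0 with hG1def
  set G₂ : ℤ×ℤ → ℂ := fun p => if (p.1+p.2) % 2 = 0 then 0 else G p with hG2def
  have hGnorm : Summable (fun p : ℤ×ℤ => ‖G p‖) :=
    (summable_D1f τ hτ).mul_norm (summable_T2f τ hτ)
  have hG1 : Summable G₁ := by
    refine Summable.of_norm_bounded hGnorm (fun p => ?_)
    simp only [hG1def]
    split_ifs with h
    · exact le_rfl
    · simp [norm_nonneg]
  have hG2 : Summable G₂ := by
    refine Summable.of_norm_bounded hGnorm (fun p => ?_)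
    simp only [hG2def]
    split_ifs with h
    · simp [norm_nonneg]
    · exact le_rfl
  have hsplit : ∀ p, G p = G₁ p + G₂ p := by
    intro p
    simp only [hG1def, hG2def]
    change G p = (if (p.1+p.2) % 2 = 0 then G p else 0) + (if (p.1+p.2) % 2 = 0 then 0 else G p)
    split_ifs <;> ring
  have step1 : ∑' p, G p = (∑' p, G₁ p) + (∑' p, G₂ p) := by
    rw [← Summable.tsum_add hG1 hG2]
    exact tsum_congr hsplit
  -- exp merging lemmas
  have hE : ∀ q : ℤ×ℤ,
      Complex.exp ((π:ℂ)*I*τ*((q.1:ℂ)+(q.2:ℂ)+1/2)^2)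
        * Complex.exp ((π:ℂ)*I*τ*((q.1:ℂ)-(q.2:ℂ)-1/2)^2)
      = Complex.exp ((π:ℂ)*I*τ*(2*(q.1:ℂ)^2 + 2*((q.2:ℂ)+1/2)^2)) := by
    intro q
    rw [← Complex.exp_add]
    congr 1
    ring
  -- even branch: g2
  have even_branch : ∑' p, G₁ p = ∑' q, W q := by
    have hinj : Function.Injective (fun q : ℤ×ℤ => ((q.1+q.2, q.2-q.1) : ℤ×ℤ)) := by
      intro a b h
      simp only [Prod.mk.injEq, Prod.ext_iff] at h ⊢
      omega
    have hsupp : Function.support G₁ ⊆ Set.range (fun q : ℤ×ℤ => ((q.1+q.2, q.2-q.1) : ℤ×ℤ)) := by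
      intro p hp
      obtain ⟨a, b⟩ := p
      have hpar : (a+b) % 2 = 0 := by
        by_contra hq
        exact hp (by simp only [hG1def]; rw [if_neg hq])
      exact ⟨((a-b)/2, (a+b)/2), by simp only [Prod.mk.injEq]; omega⟩
    rw [← hinj.tsum_eq hsupp]
    refine tsum_congr fun q => ?_
    have hpar : ((q.1+q.2) + (q.2-q.1)) % 2 = 0 := by omega
    simp only [hG1def]
    rw [if_pos hpar]
    simp only [hGdef, hWdef, D1f, T2f]
    push_cast
    have hEq : Complex.exp ((π:ℂ)*I*τ*((q.1:ℂ)+(q.2:ℂ)+1/2)^2)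
        * Complex.exp ((π:ℂ)*I*τ*((q.2:ℂ)-(q.1:ℂ)+1/2)^2)
        = Complex.exp ((π:ℂ)*I*τ*(2*(q.1:ℂ)^2 + 2*((q.2:ℂ)+1/2)^2)) := by
      rw [← Complex.exp_add]
      congr 1
      ring
    linear_combination ((π:ℂ)*(2*((q.1:ℂ)+(q.2:ℂ))+1) * (-1:ℂ)^(q.1+q.2)) * hEq
  have odd_branch : ∑' p, G₂ p = ∑' q, W q := by
    have hinj : Function.Injective (fun q : ℤ×ℤ => ((q.1+q.2, q.1-q.2-1) : ℤ×ℤ)) := by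
      intro a b h
      simp only [Prod.mk.injEq, Prod.ext_iff] at h ⊢
      omega
    have hsupp : Function.support G₂ ⊆
        Set.range (fun q : ℤ×ℤ => ((q.1+q.2, q.1-q.2-1) : ℤ×ℤ)) := by
      intro p hp
      obtain ⟨a, b⟩ := p
      have hpar : (a+b) % 2 ≠ 0 :=
        fun hq => hp (by simp only [hG2def]; rw [if_pos hq])
      exact ⟨((a+b+1)/2, (a-b-1)/2), by simp only [Prod.mk.injEq]; omega⟩
    rw [← hinj.tsum_eq hsupp]
    refine tsum_congr fun q => ?_
    have hpar : ¬ (((q.1+q.2) + (q.1-q.2-1)) % 2 = 0) := by omega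
    simp only [hG2def]
    rw [if_neg hpar]
    simp only [hGdef, hWdef, D1f, T2f]
    push_cast
    have hEq : Complex.exp ((π:ℂ)*I*τ*((q.1:ℂ)+(q.2:ℂ)+1/2)^2)
        * Complex.exp ((π:ℂ)*I*τ*((q.1:ℂ)-(q.2:ℂ)-1+1/2)^2)
        = Complex.exp ((π:ℂ)*I*τ*(2*(q.1:ℂ)^2 + 2*((q.2:ℂ)+1/2)^2)) := by
      rw [← Complex.exp_add]
      congr 1
      ring
    linear_combination ((π:ℂ)*(2*((q.1:ℂ)+(q.2:ℂ))+1) * (-1:ℂ)^(q.1+q.2)) * hEq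
  have hWHK : ∀ q : ℤ×ℤ, W q = H q + K q := by
    intro q
    simp only [hWdef, hHdef, hKdef, D1f, T2f, T4f, Jf, neg_one_zpow_add']
    have hEq : Complex.exp ((π:ℂ)*I*(2*τ)*(q.1:ℂ)^2)
        * Complex.exp ((π:ℂ)*I*(2*τ)*((q.2:ℂ)+1/2)^2)
        = Complex.exp ((π:ℂ)*I*τ*(2*(q.1:ℂ)^2 + 2*((q.2:ℂ)+1/2)^2)) := by
      rw [← Complex.exp_add]
      congr 1
      ring
    linear_combination (-(π:ℂ)*(2*(q.1:ℂ)+2*(q.2:ℂ)+1) * ((-1:ℂ)^q.1 * (-1:ℂ)^q.2)) * hEq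
  have hH : Summable H := by
    simp only [hHdef]
    exact summable_mul_of_summable_norm (summable_T4f _ h2τ) (summable_D1f _ h2τ)
  have hKb : Summable (fun k : ℤ => ‖(-1:ℂ)^k * T2f (2*τ) k‖) := by
    refine (summable_T2f _ h2τ).congr fun k => Eq.symm ?_
    rw [norm_mul, neg_one_zpow_norm', one_mul]
  have hK : Summable K := by
    simp only [hKdef]
    exact summable_mul_of_summable_norm (f := fun k : ℤ => Jf (2*τ) k)
      (g := fun k : ℤ => (-1:ℂ)^k * T2f (2*τ) k) (summable_Jf _ h2τ) hKb
  have hKzero : ∑' q : ℤ×ℤ, K q = 0 := by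
    have hneg : ∀ q : ℤ×ℤ, K (((Equiv.neg ℤ).prodCongr (Equiv.refl ℤ)) q) = - K q := by
      intro q
      obtain ⟨a, b⟩ := q
      simp only [hKdef, Jf, T2f, Equiv.prodCongr_apply, Equiv.coe_refl, Equiv.neg_apply,
        Prod.map, id_eq]
      rw [neg_one_zpow_neg']
      push_cast
      ring
    have h1 : ∑' q : ℤ×ℤ, K q = - ∑' q : ℤ×ℤ, K q := by
      conv_lhs => rw [← Equiv.tsum_eq ((Equiv.neg ℤ).prodCongr (Equiv.refl ℤ)) K]
      rw [tsum_congr hneg, tsum_neg]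
    linear_combination ((1:ℂ)/2) * h1
  calc ∑' p : ℤ×ℤ, G p = (∑' p : ℤ×ℤ, G₁ p) + (∑' p : ℤ×ℤ, G₂ p) := step1
    _ = (∑' q : ℤ×ℤ, W q) + (∑' q : ℤ×ℤ, W q) := by rw [even_branch, odd_branch]
    _ = 2 * ∑' q : ℤ×ℤ, W q := by ring
    _ = 2 * ((∑' q : ℤ×ℤ, H q) + (∑' q : ℤ×ℤ, K q)) := by
        rw [← Summable.tsum_add hH hK, tsum_congr hWHK]
    _ = 2 * ∑' q : ℤ×ℤ, H q := by rw [hKzero, add_zero]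

lemma neg_one_zpow_exp (k : ℤ) : (-1:ℂ)^k = Complex.exp ((k:ℂ) * ((π:ℂ)*I)) := by
  rw [Complex.exp_int_mul, Complex.exp_pi_mul_I]

lemma theta1_eq (τ u : ℂ) :
    theta1 u τ = -I * Complex.exp ((π:ℂ)*I*τ/4) * Complex.exp ((π:ℂ)*I*u)
      * jacobiTheta₂ (u + (τ+1)/2) τ := by
  rw [theta1, jacobiTheta₂, ← tsum_mul_left, ← tsum_mul_left]
  refine tsum_congr fun k => ?_
  have h1 : -I * ((-1:ℂ)^k * Complex.exp ((π:ℂ)*I*τ*((k:ℂ)+1/2)^2)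
        * Complex.exp ((π:ℂ)*I*(2*(k:ℂ)+1)*u))
      = -I * Complex.exp ((k:ℂ)*((π:ℂ)*I) + (π:ℂ)*I*τ*((k:ℂ)+1/2)^2
          + (π:ℂ)*I*(2*(k:ℂ)+1)*u) := by
    rw [neg_one_zpow_exp, ← Complex.exp_add, ← Complex.exp_add]
  have h2 : -I * Complex.exp ((π:ℂ)*I*τ/4) * Complex.exp ((π:ℂ)*I*u)
        * jacobiTheta₂_term k (u + (τ+1)/2) τ
      = -I * Complex.exp ((π:ℂ)*I*τ/4 + (π:ℂ)*I*u
          + (2*(π:ℂ)*I*(k:ℂ)*(u + (τ+1)/2) + (π:ℂ)*I*(k:ℂ)^2*τ)) := by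
    rw [jacobiTheta₂_term, mul_assoc, mul_assoc, ← Complex.exp_add, ← Complex.exp_add]
    congr 1
    ring
  rw [h1, h2]
  congr 1
  ring

lemma hasDerivAt_theta1 (τ : ℂ) (hτ : 0 < τ.im) :
    HasDerivAt (fun u => theta1 u τ) (∑' k : ℤ, D1f τ k) 0 := by
  have hfun : (fun u => theta1 u τ) = (fun u => -I * Complex.exp ((π:ℂ)*I*τ/4)
      * Complex.exp ((π:ℂ)*I*u) * jacobiTheta₂ (u + (τ+1)/2) τ) :=
    funext fun u => theta1_eq τ u
  rw [hfun]
  have hexp : HasDerivAt (fun u : ℂ => Complex.exp ((π:ℂ)*I*u)) ((π:ℂ)*I) 0 := by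
    have h := (((hasDerivAt_id (0:ℂ)).const_mul ((π:ℂ)*I)).cexp)
    simpa using h
  have htheta : HasDerivAt (fun u : ℂ => jacobiTheta₂ (u + (τ+1)/2) τ)
      (jacobiTheta₂' ((τ+1)/2) τ) 0 := by
    have h0 := hasDerivAt_jacobiTheta₂_fst ((0:ℂ) + (τ+1)/2) hτ
    have h := h0.comp 0 ((hasDerivAt_id (0:ℂ)).add_const ((τ+1)/2))
    simpa [Function.comp_def] using h
  have hmul := (hexp.const_mul (-I * Complex.exp ((π:ℂ)*I*τ/4))).mul htheta
  convert (by exact hmul : HasDerivAt (fun u => -I * Complex.exp ((π:ℂ)*I*τ/4)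
      * Complex.exp ((π:ℂ)*I*u) * jacobiTheta₂ (u + (τ+1)/2) τ) _ 0) using 1
  simp only [zero_add, mul_zero, Complex.exp_zero, mul_one]
  have hs1 : Summable (fun n : ℤ => jacobiTheta₂_term n ((τ+1)/2) τ) :=
    (summable_jacobiTheta₂_term_iff _ _).2 hτ
  have hs2 : Summable (fun n : ℤ => jacobiTheta₂'_term n ((τ+1)/2) τ) :=
    (summable_jacobiTheta₂'_term_iff _ _).2 hτ
  rw [jacobiTheta₂, jacobiTheta₂', ← tsum_mul_left, ← tsum_mul_left,
    ← Summable.tsum_add (hs1.mul_left _) (hs2.mul_left _)]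
  refine tsum_congr fun n => ?_
  rw [D1f, jacobiTheta₂'_term, jacobiTheta₂_term, neg_one_zpow_exp]
  have hXY : Complex.exp ((n:ℂ)*((π:ℂ)*I)) * Complex.exp ((π:ℂ)*I*τ*((n:ℂ)+1/2)^2)
      = Complex.exp ((π:ℂ)*I*τ/4)
        * Complex.exp (2*(π:ℂ)*I*(n:ℂ)*((τ+1)/2) + (π:ℂ)*I*(n:ℂ)^2*τ) := by
    rw [← Complex.exp_add, ← Complex.exp_add]
    congr 1
    ring
  linear_combination ((π:ℂ)*(2*(n:ℂ)+1)) * hXY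
    + ((π:ℂ)*(2*(n:ℂ)+1)) * Complex.exp ((π:ℂ)*I*τ/4)
      * Complex.exp (2*(π:ℂ)*I*(n:ℂ)*((τ+1)/2) + (π:ℂ)*I*(n:ℂ)^2*τ) * Complex.I_mul_I

theorem theta_derivative_ratio (τ : ℂ) (hτ : 0 < τ.im)
    (h1 : deriv (fun u => theta1 u (2 * τ)) 0 ≠ 0)
    (h2 : theta2 0 τ ≠ 0) :
    deriv (fun u => theta1 u τ) 0 / deriv (fun u => theta1 u (2 * τ)) 0 =
      2 * theta4 0 (2 * τ) / theta2 0 τ := by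
  have h2τ : 0 < (2*τ).im := by
    have h : (2*τ).im = 2*τ.im := by simp
    rw [h]; linarith
  have hth2 : theta2 0 τ = ∑' k : ℤ, T2f τ k := by
    rw [theta2]
    exact tsum_congr fun k => by rw [mul_zero, Complex.exp_zero, mul_one, T2f]
  have hth4 : theta4 0 (2*τ) = ∑' k : ℤ, T4f (2*τ) k := by
    rw [theta4]
    exact tsum_congr fun k => by rw [mul_zero, Complex.exp_zero, mul_one, T4f]
  have hD := (hasDerivAt_theta1 τ hτ).deriv
  have hD2 := (hasDerivAt_theta1 (2*τ) h2τ).deriv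
  rw [hD2] at h1
  rw [hth2] at h2
  rw [hD, hD2, hth2, hth4, div_eq_div_iff h1 h2]
  exact key_identity τ hτ
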